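/- Let φ : R^d → [0,∞] be finite on some neighborhood of the origin and coordinatewise even. Let ξ = (ξ(1),…,ξ(d)) be a centered random vector with ‖ξ‖B(φ) = τ ∈ (0,∞), i.e. for every λ ∈ R^d and every sign vector ε ∈ {−1,+1}^d, E exp(Σ_j ε(j)λ(j)ξ(j)) ≤ exp(φ(τλ)). Then for every y > 0, P( min_{j=1,…,d} |ξ(j)| > y ) ≤ 2^d · exp( −φ*(y/τ, y/τ, …, y/τ) ). -/

import Mathlib

open MeasureTheory Real ENNReal

/-- Young–Fenchel (Legendre) transform of `φ : ℝ^d → [0,∞]`: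
`φ*(y) = sup { ⟨x,y⟩ − φ(x) : φ(x) < ∞ }`. -/
noncomputable def legendreE {d : ℕ} (φ : (Fin d → ℝ) → ℝ≥0∞) (y : Fin d → ℝ) : ℝ :=
  sSup { t | ∃ x : Fin d → ℝ, φ x ≠ ⊤ ∧ t = (∑ j, x j * y j) - (φ x).toReal }

theorem key_bound {d : ℕ} (φ : (Fin d → ℝ) → ℝ≥0∞)
    (heven : ∀ ε : Fin d → ℝ, (∀ j, ε j = 1 ∨ ε j = -1) →
      ∀ l : Fin d → ℝ, φ (fun j => ε j * l j) = φ l)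
    {Ω : Type*} [MeasurableSpace Ω] (μ : Measure Ω) [IsProbabilityMeasure μ]
    (ξ : Ω → Fin d → ℝ) (hmeas : Measurable ξ)
    (τ : ℝ) (hτ : 0 < τ)
    (hmgf : ∀ l : Fin d → ℝ, ∀ ε : Fin d → ℝ, (∀ j, ε j = 1 ∨ ε j = -1) →
      φ (τ • l) ≠ ⊤ →
      ∫⁻ ω, ENNReal.ofReal (Real.exp (∑ j, ε j * l j * ξ ω j)) ∂μ
        ≤ ENNReal.ofReal (Real.exp ((φ (τ • l)).toReal)))
    (y : ℝ) (hy : 0 < y) (x : Fin d → ℝ) (hx : φ x ≠ ⊤) :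
    (μ {ω | ∀ j, y < |ξ ω j|}).toReal ≤
      2 ^ d * Real.exp (-((∑ j, x j * (y / τ)) - (φ x).toReal)) := by
  classical
  set a : Fin d → ℝ := fun j => |x j| with ha_def
  have ha : φ a = φ x := by
    have h := heven (fun j => if x j < 0 then -1 else 1)
      (fun j => by split_ifs <;> simp) x
    rw [← h]
    congr 1
    funext j
    by_cases hj : x j < 0
    · simp [ha_def, hj, abs_of_neg hj]
    · simp [ha_def, hj, abs_of_nonneg (not_lt.mp hj)]
  set l : Fin d → ℝ := fun j => a j / τ with hl_def
  have hτl : τ • l = a := by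
    funext j
    simp [hl_def, Pi.smul_apply, smul_eq_mul]
    field_simp
  set S0 : ℝ := ∑ j, l j * y with hS0_def
  set signs : Finset (Fin d → ℝ) := Fintype.piFinset (fun _ => ({1, -1} : Finset ℝ))
    with hsigns_def
  set A : (Fin d → ℝ) → Set Ω := fun ε => {ω | ∀ j, y < ε j * ξ ω j} with hA_def
  -- the main event is contained in the union of the A ε
  have hsub : {ω | ∀ j, y < |ξ ω j|} ⊆ ⋃ ε ∈ signs, A ε := by
    intro ω hω
    refine Set.mem_iUnion₂.mpr ⟨fun j => if 0 ≤ ξ ω j then (1:ℝ) else -1, ?_, ?_⟩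
    · simp only [hsigns_def, Fintype.mem_piFinset]
      intro j; split_ifs <;> simp
    · intro j
      by_cases hj : 0 ≤ ξ ω j
      · simpa [hj, abs_of_nonneg hj] using hω j
      · simpa [hj, abs_of_neg (not_le.mp hj)] using hω j
  -- bound on each μ (A ε)
  have hbound : ∀ ε ∈ signs, μ (A ε) ≤
      ENNReal.ofReal (Real.exp ((φ x).toReal - S0)) := by
    intro ε hε
    have hε' : ∀ j, ε j = 1 ∨ ε j = -1 := by
      intro j
      have := (Fintype.mem_piFinset.mp hε) j
      simpa using this
    have hmgf' := hmgf l ε hε' (by rw [hτl]; rw [ha]; exact hx)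
    rw [hτl, ha] at hmgf'
    have hfmeas : Measurable fun ω => ENNReal.ofReal (Real.exp (∑ j, ε j * l j * ξ ω j)) := by
      apply Measurable.ennreal_ofReal
      apply Real.measurable_exp.comp
      exact Finset.measurable_sum _ fun j _ =>
        (measurable_const.mul ((measurable_pi_apply j).comp hmeas))
    have hsub2 : A ε ⊆ {ω | ENNReal.ofReal (Real.exp S0) ≤
        ENNReal.ofReal (Real.exp (∑ j, ε j * l j * ξ ω j))} := by
      intro ω hω
      simp only [Set.mem_setOf_eq]
      apply ENNReal.ofReal_le_ofReal
      apply Real.exp_le_exp.mpr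
      apply Finset.sum_le_sum
      intro j _
      have hlj : 0 ≤ l j := div_nonneg (abs_nonneg _) hτ.le
      have h1 : ε j * l j * ξ ω j = l j * (ε j * ξ ω j) := by ring
      rw [h1]
      exact mul_le_mul_of_nonneg_left (hω j).le hlj
    have hmul : ENNReal.ofReal (Real.exp S0) * μ (A ε) ≤
        ENNReal.ofReal (Real.exp ((φ x).toReal)) := by
      calc ENNReal.ofReal (Real.exp S0) * μ (A ε)
          ≤ ENNReal.ofReal (Real.exp S0) * μ {ω | ENNReal.ofReal (Real.exp S0) ≤
              ENNReal.ofReal (Real.exp (∑ j, ε j * l j * ξ ω j))} := by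
            exact mul_le_mul_right (measure_mono hsub2) _
        _ ≤ ∫⁻ ω, ENNReal.ofReal (Real.exp (∑ j, ε j * l j * ξ ω j)) ∂μ :=
            mul_meas_ge_le_lintegral₀ hfmeas.aemeasurable _
        _ ≤ ENNReal.ofReal (Real.exp ((φ x).toReal)) := hmgf'
    have h0 : (ENNReal.ofReal (Real.exp S0)) ≠ 0 := by
      simp [ENNReal.ofReal_eq_zero, not_le, Real.exp_pos]
    have htop : (ENNReal.ofReal (Real.exp S0)) ≠ ⊤ := ENNReal.ofReal_ne_top
    have hmul' : μ (A ε) * ENNReal.ofReal (Real.exp S0) ≤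
        ENNReal.ofReal (Real.exp ((φ x).toReal)) := by
      rw [mul_comm]; exact hmul
    have := (ENNReal.le_div_iff_mul_le (Or.inl h0) (Or.inl htop)).mpr hmul'
    calc μ (A ε) ≤ ENNReal.ofReal (Real.exp ((φ x).toReal)) /
          ENNReal.ofReal (Real.exp S0) := this
      _ = ENNReal.ofReal (Real.exp ((φ x).toReal) / Real.exp S0) := by
          rw [ENNReal.ofReal_div_of_pos (Real.exp_pos _)]
      _ = ENNReal.ofReal (Real.exp ((φ x).toReal - S0)) := by
          rw [Real.exp_sub]
  -- measurability of A ε is not needed; total bound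
  have hcard : signs.card = 2 ^ d := by
    rw [hsigns_def, Fintype.card_piFinset]
    simp [Finset.card_pair (by norm_num : (1:ℝ) ≠ -1)]
  have htotal : μ {ω | ∀ j, y < |ξ ω j|} ≤
      (2 ^ d : ℝ≥0∞) * ENNReal.ofReal (Real.exp ((φ x).toReal - S0)) := by
    calc μ {ω | ∀ j, y < |ξ ω j|} ≤ μ (⋃ ε ∈ signs, A ε) := measure_mono hsub
      _ ≤ ∑ ε ∈ signs, μ (A ε) := measure_biUnion_finset_le signs A
      _ ≤ ∑ _ε ∈ signs, ENNReal.ofReal (Real.exp ((φ x).toReal - S0)) :=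
          Finset.sum_le_sum hbound
      _ = (signs.card : ℝ≥0∞) * ENNReal.ofReal (Real.exp ((φ x).toReal - S0)) := by
          rw [Finset.sum_const, nsmul_eq_mul]
      _ = (2 ^ d : ℝ≥0∞) * ENNReal.ofReal (Real.exp ((φ x).toReal - S0)) := by
          rw [hcard]; push_cast; ring_nf
  have hS0x : ∑ j, x j * (y / τ) ≤ S0 := by
    rw [hS0_def]
    apply Finset.sum_le_sum
    intro j _
    have : l j * y = a j * (y / τ) := by rw [hl_def]; ring
    rw [this]
    exact mul_le_mul_of_nonneg_right (le_abs_self _) (div_nonneg hy.le hτ.le)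
  have hfin' : (2 ^ d : ℝ≥0∞) * ENNReal.ofReal (Real.exp ((φ x).toReal - S0)) ≠ ⊤ :=
    ENNReal.mul_ne_top (by simp) ENNReal.ofReal_ne_top
  calc (μ {ω | ∀ j, y < |ξ ω j|}).toReal
      ≤ ((2 ^ d : ℝ≥0∞) * ENNReal.ofReal (Real.exp ((φ x).toReal - S0))).toReal :=
        ENNReal.toReal_mono hfin' htotal
    _ = 2 ^ d * Real.exp ((φ x).toReal - S0) := by
        rw [ENNReal.toReal_mul, ENNReal.toReal_ofReal (Real.exp_pos _).le]
        simp
    _ ≤ 2 ^ d * Real.exp (-((∑ j, x j * (y / τ)) - (φ x).toReal)) := by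
        apply mul_le_mul_of_nonneg_left _ (by positivity)
        apply Real.exp_le_exp.mpr
        linarith

theorem stmt3 {d : ℕ} (φ : (Fin d → ℝ) → ℝ≥0∞)
    (hfin : ∃ V ∈ nhds (0 : Fin d → ℝ), ∀ x ∈ V, φ x ≠ ⊤)
    (heven : ∀ ε : Fin d → ℝ, (∀ j, ε j = 1 ∨ ε j = -1) →
      ∀ l : Fin d → ℝ, φ (fun j => ε j * l j) = φ l)
    {Ω : Type*} [MeasurableSpace Ω] (μ : Measure Ω) [IsProbabilityMeasure μ]
    (ξ : Ω → Fin d → ℝ) (hmeas : Measurable ξ)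
    (hcent : ∀ j, Integrable (fun ω => ξ ω j) μ ∧ ∫ ω, ξ ω j ∂μ = 0)
    (τ : ℝ) (hτ : 0 < τ)
    (hmgf : ∀ l : Fin d → ℝ, ∀ ε : Fin d → ℝ, (∀ j, ε j = 1 ∨ ε j = -1) →
      φ (τ • l) ≠ ⊤ →
      ∫⁻ ω, ENNReal.ofReal (Real.exp (∑ j, ε j * l j * ξ ω j)) ∂μ
        ≤ ENNReal.ofReal (Real.exp ((φ (τ • l)).toReal))) :
    ∀ y : ℝ, 0 < y →
      (μ {ω | ∀ j, y < |ξ ω j|}).toReal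
        ≤ 2 ^ d * Real.exp (-(legendreE φ (fun _ => y / τ))) := by
  intro y hy
  set L : ℝ := (μ {ω | ∀ j, y < |ξ ω j|}).toReal with hL_def
  have hL0 : 0 ≤ L := ENNReal.toReal_nonneg
  by_cases hL : L = 0
  · rw [hL]; positivity
  have hLpos : 0 < L := lt_of_le_of_ne hL0 (Ne.symm hL)
  have hL1 : L ≤ 1 := by
    rw [hL_def]
    calc (μ {ω | ∀ j, y < |ξ ω j|}).toReal ≤ (μ Set.univ).toReal :=
          ENNReal.toReal_mono (by simp) (measure_mono (Set.subset_univ _))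
      _ = 1 := by simp
  have h2d : (1:ℝ) ≤ 2 ^ d := one_le_pow₀ (by norm_num)
  have hsup : legendreE φ (fun _ => y / τ) ≤ Real.log (2 ^ d / L) := by
    apply Real.sSup_le
    · rintro t ⟨x, hx, rfl⟩
      have hkey := key_bound φ heven μ ξ hmeas τ hτ hmgf y hy x hx
      rw [← hL_def] at hkey
      rw [Real.le_log_iff_exp_le (by positivity)]
      rw [le_div_iff₀ hLpos]
      set t := (∑ j, x j * (y / τ)) - (φ x).toReal
      have := mul_le_mul_of_nonneg_right hkey (Real.exp_pos t).le
      calc Real.exp t * L ≤ (2 ^ d * Real.exp (-t)) * Real.exp t := by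
            rw [mul_comm (Real.exp t) L]; exact this
        _ = 2 ^ d := by rw [mul_assoc, ← Real.exp_add]; simp
    · apply Real.log_nonneg
      rw [le_div_iff₀ hLpos]
      linarith
  calc L = 2 ^ d * (L / 2 ^ d) := by field_simp
    _ ≤ 2 ^ d * Real.exp (-(legendreE φ (fun _ => y / τ))) := by
        apply mul_le_mul_of_nonneg_left _ (by positivity)
        have : L / 2 ^ d = Real.exp (-(Real.log (2 ^ d / L))) := by
          rw [Real.exp_neg, Real.exp_log (by positivity), inv_div]
        rw [this]
        exact Real.exp_le_exp.mpr (neg_le_neg hsup)
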